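/- Let X1,...,Xn be i.i.d. uniform in [0,1]^{d_n}. If d_n − (2/log 2) log n → −∞, then the number of non-Pareto points n − K_{n,d_n} tends to infinity in probability. -/

import Mathlib

open MeasureTheory ProbabilityTheory Filter Real Finset
open scoped ENNReal

/-- Uniform distribution on the unit cube `[0,1]^d`. -/
noncomputable def cube (d : ℕ) : Measure (Fin d → ℝ) :=
  Measure.pi fun _ => volume.restrict (Set.Icc 0 1)

/-- Joint law of `n` i.i.d. points uniform in `[0,1]^d`. -/
noncomputable def sample (n d : ℕ) : Measure (Fin n → Fin d → ℝ) :=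
  Measure.pi fun _ => cube d

/-- `x` dominates `y` coordinatewise. -/
def dominates {d : ℕ} (x y : Fin d → ℝ) : Prop := ∀ k, y k ≤ x k

open scoped Classical in
/-- Number of points `X_i` dominates among the others. -/
noncomputable def domCount (n d : ℕ) (ω : Fin n → Fin d → ℝ) (i : Fin n) : ℕ :=
  (Finset.univ.filter fun j => j ≠ i ∧ dominates (ω i) (ω j)).card

open scoped Classical in
/-- Number of non-Pareto points (points dominating at least one other point). -/
noncomputable def nonParetoCount (n d : ℕ) (ω : Fin n → Fin d → ℝ) : ℕ :=
  (Finset.univ.filter fun i => 1 ≤ domCount n d ω i).card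

open scoped Classical in
/-- Number of points dominating exactly `r` other points. -/
noncomputable def layerCount (r n d : ℕ) (ω : Fin n → Fin d → ℝ) : ℕ :=
  (Finset.univ.filter fun i => domCount n d ω i = r).card

namespace NPSub

noncomputable def mu0 : Measure ℝ := volume.restrict (Set.Icc 0 1)

instance : IsProbabilityMeasure mu0 :=
  ⟨by simp [mu0, Real.volume_Icc]⟩

lemma cube_eq (d : ℕ) : cube d = Measure.pi fun _ : Fin d => mu0 := rfl

instance (d : ℕ) : IsProbabilityMeasure (cube d) := by
  rw [cube_eq]; infer_instance

instance (n d : ℕ) : IsProbabilityMeasure (sample n d) := by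
  unfold sample; infer_instance

lemma measurableSet_domProd (d : ℕ) :
    MeasurableSet {p : (Fin d → ℝ) × (Fin d → ℝ) | dominates p.1 p.2} := by
  have h : {p : (Fin d → ℝ) × (Fin d → ℝ) | dominates p.1 p.2}
      = ⋂ k, {p : (Fin d → ℝ) × (Fin d → ℝ) | p.2 k ≤ p.1 k} := by
    ext p; simp [dominates]
  rw [h]
  exact MeasurableSet.iInter fun k =>
    measurableSet_le (measurable_snd.eval) (measurable_fst.eval)

/-- The domination event between points `i` and `j`. -/
def D (n d : ℕ) (i j : Fin n) : Set (Fin n → Fin d → ℝ) :=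
  {ω | dominates (ω i) (ω j)}

lemma measurable_pair (n d : ℕ) (i j : Fin n) :
    Measurable (fun ω : Fin n → Fin d → ℝ => (ω i, ω j)) :=
  (measurable_pi_apply i).prodMk (measurable_pi_apply j)

lemma measurableSet_D (n d : ℕ) (i j : Fin n) : MeasurableSet (D n d i j) :=
  (measurable_pair n d i j) (measurableSet_domProd d)

/-- Marginals of an i.i.d. product along an injective index map. -/
lemma marginal {ι ι' : Type*} [Fintype ι] [Fintype ι'] {E : Type*} [MeasurableSpace E]
    (μ : Measure E) [IsProbabilityMeasure μ] (g : ι' → ι) (hg : Function.Injective g) :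
    MeasurePreserving (fun ω : ι → E => ω ∘ g)
      (Measure.pi fun _ => μ) (Measure.pi fun _ => μ) := by
  classical
  have hmeas : Measurable (fun ω : ι → E => ω ∘ g) :=
    measurable_pi_lambda _ fun t => measurable_pi_apply (g t)
  refine ⟨hmeas, ?_⟩
  refine (Measure.pi_eq (μ := fun _ : ι' => μ) fun s hs => ?_).symm
  rw [Measure.map_apply hmeas (MeasurableSet.univ_pi hs)]
  have hpre : (fun ω : ι → E => ω ∘ g) ⁻¹' (Set.pi Set.univ s)
      = Set.pi Set.univ (fun i => ⋂ (t : ι') (_ : g t = i), s t) := by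
    ext ω
    simp only [Set.mem_preimage, Set.mem_pi, Set.mem_univ, forall_true_left, Set.mem_iInter,
      Function.comp_apply]
    constructor
    · intro h i t ht; subst ht; exact h t
    · intro h t; exact h (g t) t rfl
  rw [hpre, Measure.pi_pi]
  have hx : ∀ t : ι', (⋂ (t' : ι') (_ : g t' = g t), s t') = s t := by
    intro t
    apply Set.Subset.antisymm
    · intro x hx
      exact (Set.mem_iInter₂.1 hx) t rfl
    · intro x hx
      refine Set.mem_iInter₂.2 fun t' ht' => ?_
      rcases hg ht' with rfl; exact hx
  have hy : ∀ i : ι, i ∉ Finset.univ.image g → (⋂ (t : ι') (_ : g t = i), s t) = Set.univ := by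
    intro i hi
    apply Set.eq_univ_of_forall
    intro x
    refine Set.mem_iInter₂.2 fun t ht => ?_
    exact absurd (Finset.mem_image.2 ⟨t, Finset.mem_univ t, ht⟩) hi
  calc ∏ i, μ (⋂ (t : ι') (_ : g t = i), s t)
      = ∏ i ∈ Finset.univ.image g, μ (⋂ (t : ι') (_ : g t = i), s t) := by
        refine (Finset.prod_subset (Finset.subset_univ _) ?_).symm
        intro i _ hi; rw [hy i hi]; simp
    _ = ∏ t : ι', μ (⋂ (t' : ι') (_ : g t' = g t), s t') := Finset.prod_image (fun a _ b _ h => hg h)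
    _ = ∏ t : ι', μ (s t) := by
        refine Finset.prod_congr rfl fun t _ => ?_
        rw [hx t]

lemma mu0_Iic {a : ℝ} (h : a ∈ Set.Icc (0:ℝ) 1) : mu0 (Set.Iic a) = ENNReal.ofReal a := by
  rw [mu0, Measure.restrict_apply measurableSet_Iic]
  have : Set.Iic a ∩ Set.Icc 0 1 = Set.Icc 0 a := by
    ext x
    simp only [Set.mem_inter_iff, Set.mem_Iic, Set.mem_Icc]
    exact ⟨fun ⟨h1, h2, _⟩ => ⟨h2, h1⟩, fun ⟨h1, h2⟩ => ⟨h2, h1, h2.trans h.2⟩⟩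
  rw [this, Real.volume_Icc, sub_zero]

lemma mu0_Ici {a : ℝ} (h : a ∈ Set.Icc (0:ℝ) 1) : mu0 (Set.Ici a) = ENNReal.ofReal (1 - a) := by
  rw [mu0, Measure.restrict_apply measurableSet_Ici]
  have : Set.Ici a ∩ Set.Icc 0 1 = Set.Icc a 1 := by
    ext x
    simp only [Set.mem_inter_iff, Set.mem_Ici, Set.mem_Icc]
    exact ⟨fun ⟨h1, _, h2⟩ => ⟨h1, h2⟩, fun ⟨h1, h2⟩ => ⟨h1, h.1.trans h1, h2⟩⟩
  rw [this, Real.volume_Icc]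

lemma mu0_ae : ∀ᵐ a ∂mu0, a ∈ Set.Icc (0:ℝ) 1 :=
  (ae_restrict_iff' measurableSet_Icc).2 (ae_of_all _ fun _ h => h)

lemma lint_id : ∫⁻ a, ENNReal.ofReal a ∂mu0 = ENNReal.ofReal (1/2) := by
  rw [← ofReal_integral_eq_lintegral_ofReal]
  · congr 1
    rw [mu0, integral_Icc_eq_integral_Ioc, ← intervalIntegral.integral_of_le (by norm_num : (0:ℝ) ≤ 1),
      integral_id]
    norm_num
  · exact (continuous_id : Continuous fun x : ℝ => x).integrableOn_Icc
  · exact (ae_restrict_iff' measurableSet_Icc).2 (ae_of_all _ fun _ h => h.1)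

lemma lint_sq : ∫⁻ a, ENNReal.ofReal a ^ 2 ∂mu0 = ENNReal.ofReal (1/3) := by
  have h1 : ∫⁻ a, ENNReal.ofReal a ^ 2 ∂mu0 = ∫⁻ a, ENNReal.ofReal (a ^ 2) ∂mu0 := by
    refine lintegral_congr_ae (mu0_ae.mono fun a ha => ?_)
    exact (ENNReal.ofReal_pow ha.1 2).symm
  rw [h1, ← ofReal_integral_eq_lintegral_ofReal]
  · congr 1
    rw [mu0, integral_Icc_eq_integral_Ioc, ← intervalIntegral.integral_of_le (by norm_num : (0:ℝ) ≤ 1),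
      integral_pow]
    norm_num
  · exact (continuous_pow 2).integrableOn_Icc
  · exact ae_of_all _ fun a => sq_nonneg a

lemma lint_one_sub_sq : ∫⁻ a, ENNReal.ofReal (1 - a) ^ 2 ∂mu0 = ENNReal.ofReal (1/3) := by
  have h1 : ∫⁻ a, ENNReal.ofReal (1 - a) ^ 2 ∂mu0 = ∫⁻ a, ENNReal.ofReal ((1 - a) ^ 2) ∂mu0 := by
    refine lintegral_congr_ae (mu0_ae.mono fun a ha => ?_)
    exact (ENNReal.ofReal_pow (by linarith [ha.2] : (0:ℝ) ≤ 1 - a) 2).symm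
  rw [h1, ← ofReal_integral_eq_lintegral_ofReal]
  · congr 1
    rw [mu0, integral_Icc_eq_integral_Ioc, ← intervalIntegral.integral_of_le (by norm_num : (0:ℝ) ≤ 1)]
    have : ∫ x in (0:ℝ)..1, (1 - x) ^ 2 = ∫ x in (0:ℝ)..1, x ^ 2 := by
      rw [show (fun x : ℝ => (1 - x)^2) = fun x : ℝ => ((fun y : ℝ => y ^ 2) (1 - x)) from rfl,
        intervalIntegral.integral_comp_sub_left (fun y : ℝ => y ^ 2) 1]
      norm_num
    rw [this, integral_pow]
    norm_num
  · exact ((continuous_const.sub continuous_id).pow 2).integrableOn_Icc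
  · exact ae_of_all _ fun a => sq_nonneg _

lemma lintegral_pi_prod {d : ℕ} (f : ℝ → ℝ≥0∞) (hf : Measurable f) :
    ∫⁻ x, ∏ k, f (x k) ∂(cube d) = (∫⁻ a, f a ∂mu0) ^ d := by
  induction d with
  | zero =>
      simp only [Finset.univ_eq_empty, Finset.prod_empty, pow_zero]
      rw [lintegral_one]
      exact measure_univ
  | succ d ih =>
      rw [cube_eq]
      have mp := measurePreserving_piFinSuccAbove (fun _ : Fin (d+1) => mu0) 0
      have hG : Measurable (fun y : ℝ × (Fin d → ℝ) => f y.1 * ∏ j, f (y.2 j)) := by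
        apply Measurable.mul (hf.comp measurable_fst)
        exact Finset.measurable_prod _ fun j _ => hf.comp (measurable_snd.eval)
      have heq : ∀ x : Fin (d+1) → ℝ,
          (∏ k, f (x k)) = (fun y : ℝ × (Fin d → ℝ) => f y.1 * ∏ j, f (y.2 j))
            ((MeasurableEquiv.piFinSuccAbove (fun _ => ℝ) 0) x) := by
        intro x
        simp only [MeasurableEquiv.piFinSuccAbove_apply]
        rw [Fin.prod_univ_succ]
        congr 1
      calc ∫⁻ x, ∏ k, f (x k) ∂(Measure.pi fun _ : Fin (d+1) => mu0)
          = ∫⁻ y, f y.1 * ∏ j, f (y.2 j) ∂(mu0.prod (Measure.pi fun _ : Fin d => mu0)) := by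
            rw [← mp.lintegral_comp hG]
            exact lintegral_congr fun x => heq x
        _ = (∫⁻ a, f a ∂mu0) * ∫⁻ w, ∏ j, f (w j) ∂(Measure.pi fun _ : Fin d => mu0) := by
            exact lintegral_prod_mul hf.aemeasurable
              (Finset.measurable_prod _ fun j _ => hf.comp (measurable_pi_apply j)).aemeasurable
        _ = (∫⁻ a, f a ∂mu0) ^ (d+1) := by
            rw [← cube_eq, ih, pow_succ]
            ring

lemma cube_ae (d : ℕ) : ∀ᵐ x ∂(cube d), ∀ k, x k ∈ Set.Icc (0:ℝ) 1 := by
  have hset : {x : Fin d → ℝ | ∀ k, x k ∈ Set.Icc (0:ℝ) 1}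
      = Set.pi Set.univ (fun _ : Fin d => Set.Icc (0:ℝ) 1) := by
    ext x; simp only [Set.mem_setOf_eq, Set.mem_univ_pi]
  have hmeas : MeasurableSet {x : Fin d → ℝ | ∀ k, x k ∈ Set.Icc (0:ℝ) 1} := by
    rw [hset]; exact MeasurableSet.univ_pi fun _ => measurableSet_Icc
  have h1 : cube d {x : Fin d → ℝ | ∀ k, x k ∈ Set.Icc (0:ℝ) 1} = 1 := by
    rw [hset, cube_eq, Measure.pi_pi]
    simp [mu0, Real.volume_Icc]
  rw [ae_iff]
  rw [show {a : Fin d → ℝ | ¬∀ k, a k ∈ Set.Icc (0:ℝ) 1}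
      = {x : Fin d → ℝ | ∀ k, x k ∈ Set.Icc (0:ℝ) 1}ᶜ from rfl,
    measure_compl hmeas (by rw [h1]; exact ENNReal.one_ne_top), h1, measure_univ, tsub_self]


lemma measurableSet_dom23 (d : ℕ) :
    MeasurableSet {y : (Fin d → ℝ) × (Fin 2 → Fin d → ℝ) |
      dominates y.1 (y.2 0) ∧ dominates y.1 (y.2 1)} := by
  have h0 : Measurable (fun y : (Fin d → ℝ) × (Fin 2 → Fin d → ℝ) => (y.1, y.2 0)) :=
    measurable_fst.prodMk (measurable_snd.eval)
  have h1 : Measurable (fun y : (Fin d → ℝ) × (Fin 2 → Fin d → ℝ) => (y.1, y.2 1)) :=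
    measurable_fst.prodMk (measurable_snd.eval)
  exact (h0 (measurableSet_domProd d)).inter (h1 (measurableSet_domProd d))

lemma measurableSet_dom23' (d : ℕ) :
    MeasurableSet {y : (Fin d → ℝ) × (Fin 2 → Fin d → ℝ) |
      dominates (y.2 0) y.1 ∧ dominates (y.2 1) y.1} := by
  have h0 : Measurable (fun y : (Fin d → ℝ) × (Fin 2 → Fin d → ℝ) => (y.2 0, y.1)) :=
    (measurable_snd.eval).prodMk measurable_fst
  have h1 : Measurable (fun y : (Fin d → ℝ) × (Fin 2 → Fin d → ℝ) => (y.2 1, y.1)) :=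
    (measurable_snd.eval).prodMk measurable_fst
  exact (h0 (measurableSet_domProd d)).inter (h1 (measurableSet_domProd d))

lemma domset_eq (d : ℕ) (x : Fin d → ℝ) :
    {y : Fin d → ℝ | dominates x y} = Set.pi Set.univ fun k => Set.Iic (x k) := by
  ext y
  simp only [Set.mem_setOf_eq, Set.mem_univ_pi, Set.mem_Iic]
  exact Iff.rfl

lemma domset_eq' (d : ℕ) (x : Fin d → ℝ) :
    {y : Fin d → ℝ | dominates y x} = Set.pi Set.univ fun k => Set.Ici (x k) := by
  ext y
  simp only [Set.mem_setOf_eq, Set.mem_univ_pi, Set.mem_Ici]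
  exact Iff.rfl

lemma p2 (d : ℕ) : sample 2 d {ω | dominates (ω 0) (ω 1)} = ENNReal.ofReal (1/2) ^ d := by
  have mp := measurePreserving_finTwoArrow (cube d)
  have hpre : {ω : Fin 2 → Fin d → ℝ | dominates (ω 0) (ω 1)}
      = (MeasurableEquiv.finTwoArrow) ⁻¹' {p : (Fin d → ℝ) × (Fin d → ℝ) | dominates p.1 p.2} :=
    rfl
  rw [show sample 2 d = Measure.pi fun _ : Fin 2 => cube d from rfl, hpre,
    mp.measure_preimage (measurableSet_domProd d).nullMeasurableSet,
    Measure.prod_apply (measurableSet_domProd d)]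
  calc ∫⁻ x, cube d (Prod.mk x ⁻¹' {p : (Fin d → ℝ) × (Fin d → ℝ) | dominates p.1 p.2}) ∂cube d
      = ∫⁻ x, ∏ k, ENNReal.ofReal (x k) ∂cube d := by
        refine lintegral_congr_ae ((cube_ae d).mono fun x hx => ?_)
        dsimp only
        have : Prod.mk x ⁻¹' {p : (Fin d → ℝ) × (Fin d → ℝ) | dominates p.1 p.2}
            = {y : Fin d → ℝ | dominates x y} := rfl
        rw [this, domset_eq, cube_eq, Measure.pi_pi]
        exact Finset.prod_congr rfl fun k _ => mu0_Iic (hx k)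
    _ = (∫⁻ a, ENNReal.ofReal a ∂mu0) ^ d := lintegral_pi_prod _ ENNReal.measurable_ofReal
    _ = _ := by rw [lint_id]

lemma p3out (d : ℕ) : sample 3 d {ω | dominates (ω 0) (ω 1) ∧ dominates (ω 0) (ω 2)}
    = ENNReal.ofReal (1/3) ^ d := by
  have mp := measurePreserving_piFinSuccAbove (fun _ : Fin 3 => cube d) 0
  have hpre : {ω : Fin 3 → Fin d → ℝ | dominates (ω 0) (ω 1) ∧ dominates (ω 0) (ω 2)}
      = (MeasurableEquiv.piFinSuccAbove (fun _ : Fin 3 => Fin d → ℝ) 0) ⁻¹'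
        {y : (Fin d → ℝ) × (Fin 2 → Fin d → ℝ) |
          dominates y.1 (y.2 0) ∧ dominates y.1 (y.2 1)} := rfl
  rw [show sample 3 d = Measure.pi fun _ : Fin 3 => cube d from rfl, hpre,
    mp.measure_preimage (measurableSet_dom23 d).nullMeasurableSet,
    Measure.prod_apply (measurableSet_dom23 d)]
  calc ∫⁻ x, (Measure.pi fun _ : Fin 2 => cube d)
        (Prod.mk x ⁻¹' {y : (Fin d → ℝ) × (Fin 2 → Fin d → ℝ) |
          dominates y.1 (y.2 0) ∧ dominates y.1 (y.2 1)}) ∂cube d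
      = ∫⁻ x, ∏ k, (ENNReal.ofReal (x k)) ^ 2 ∂cube d := by
        refine lintegral_congr_ae ((cube_ae d).mono fun x hx => ?_)
        dsimp only
        have h1 : Prod.mk x ⁻¹' {y : (Fin d → ℝ) × (Fin 2 → Fin d → ℝ) |
            dominates y.1 (y.2 0) ∧ dominates y.1 (y.2 1)}
            = Set.pi Set.univ fun _ : Fin 2 => {y : Fin d → ℝ | dominates x y} := by
          ext w
          simp only [Set.mem_preimage, Set.mem_setOf_eq, Set.mem_univ_pi, Fin.forall_fin_two]
        rw [h1, Measure.pi_pi]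
        have h2 : cube d {y : Fin d → ℝ | dominates x y} = ∏ k, ENNReal.ofReal (x k) := by
          rw [domset_eq, cube_eq, Measure.pi_pi]
          exact Finset.prod_congr rfl fun k _ => mu0_Iic (hx k)
        rw [Finset.prod_const, h2, ← Finset.prod_pow]
        simp
    _ = (∫⁻ a, ENNReal.ofReal a ^ 2 ∂mu0) ^ d :=
        lintegral_pi_prod _ (ENNReal.measurable_ofReal.pow_const 2)
    _ = _ := by rw [lint_sq]

lemma p3in (d : ℕ) : sample 3 d {ω | dominates (ω 1) (ω 0) ∧ dominates (ω 2) (ω 0)}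
    = ENNReal.ofReal (1/3) ^ d := by
  have mp := measurePreserving_piFinSuccAbove (fun _ : Fin 3 => cube d) 0
  have hpre : {ω : Fin 3 → Fin d → ℝ | dominates (ω 1) (ω 0) ∧ dominates (ω 2) (ω 0)}
      = (MeasurableEquiv.piFinSuccAbove (fun _ : Fin 3 => Fin d → ℝ) 0) ⁻¹'
        {y : (Fin d → ℝ) × (Fin 2 → Fin d → ℝ) |
          dominates (y.2 0) y.1 ∧ dominates (y.2 1) y.1} := rfl
  rw [show sample 3 d = Measure.pi fun _ : Fin 3 => cube d from rfl, hpre,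
    mp.measure_preimage (measurableSet_dom23' d).nullMeasurableSet,
    Measure.prod_apply (measurableSet_dom23' d)]
  calc ∫⁻ x, (Measure.pi fun _ : Fin 2 => cube d)
        (Prod.mk x ⁻¹' {y : (Fin d → ℝ) × (Fin 2 → Fin d → ℝ) |
          dominates (y.2 0) y.1 ∧ dominates (y.2 1) y.1}) ∂cube d
      = ∫⁻ x, ∏ k, (ENNReal.ofReal (1 - x k)) ^ 2 ∂cube d := by
        refine lintegral_congr_ae ((cube_ae d).mono fun x hx => ?_)
        dsimp only
        have h1 : Prod.mk x ⁻¹' {y : (Fin d → ℝ) × (Fin 2 → Fin d → ℝ) |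
            dominates (y.2 0) y.1 ∧ dominates (y.2 1) y.1}
            = Set.pi Set.univ fun _ : Fin 2 => {y : Fin d → ℝ | dominates y x} := by
          ext w
          simp only [Set.mem_preimage, Set.mem_setOf_eq, Set.mem_univ_pi, Fin.forall_fin_two]
        rw [h1, Measure.pi_pi]
        have h2 : cube d {y : Fin d → ℝ | dominates y x} = ∏ k, ENNReal.ofReal (1 - x k) := by
          rw [domset_eq', cube_eq, Measure.pi_pi]
          exact Finset.prod_congr rfl fun k _ => mu0_Ici (hx k)
        rw [Finset.prod_const, h2, ← Finset.prod_pow]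
        simp
    _ = (∫⁻ a, ENNReal.ofReal (1 - a) ^ 2 ∂mu0) ^ d :=
        lintegral_pi_prod _ ((measurable_const.sub measurable_id).ennreal_ofReal.pow_const 2)
    _ = _ := by rw [lint_one_sub_sq]

lemma p4 (d : ℕ) : sample 4 d {ω | dominates (ω 0) (ω 1) ∧ dominates (ω 2) (ω 3)}
    = ENNReal.ofReal (1/2) ^ d * ENNReal.ofReal (1/2) ^ d := by
  classical
  have mp1 := measurePreserving_piCongrLeft (fun _ : Fin 4 => cube d) (finSumFinEquiv (m := 2) (n := 2))
  have mp2 := measurePreserving_sumPiEquivProdPi (fun _ : Fin 2 ⊕ Fin 2 => cube d)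
  set S : Set (Fin 2 → Fin d → ℝ) := {w | dominates (w 0) (w 1)} with hS
  have hSmeas : MeasurableSet S := by
    have h0 : Measurable (fun w : Fin 2 → Fin d → ℝ => (w 0, w 1)) :=
      (measurable_pi_apply 0).prodMk (measurable_pi_apply 1)
    exact h0 (measurableSet_domProd d)
  set A : Set (Fin 4 → Fin d → ℝ) := {ω | dominates (ω 0) (ω 1) ∧ dominates (ω 2) (ω 3)} with hA
  have hAmeas : MeasurableSet A := by
    have h0 : Measurable (fun ω : Fin 4 → Fin d → ℝ => (ω 0, ω 1)) :=
      (measurable_pi_apply 0).prodMk (measurable_pi_apply 1)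
    have h1 : Measurable (fun ω : Fin 4 → Fin d → ℝ => (ω 2, ω 3)) :=
      (measurable_pi_apply 2).prodMk (measurable_pi_apply 3)
    exact (h0 (measurableSet_domProd d)).inter (h1 (measurableSet_domProd d))
  have step1 : sample 4 d A
      = (Measure.pi fun _ : Fin 2 ⊕ Fin 2 => cube d)
        ((MeasurableEquiv.piCongrLeft (fun _ : Fin 4 => Fin d → ℝ) finSumFinEquiv) ⁻¹' A) := by
    rw [show sample 4 d = Measure.pi fun _ : Fin 4 => cube d from rfl]
    exact (mp1.measure_preimage hAmeas.nullMeasurableSet).symm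
  have hpre : (MeasurableEquiv.piCongrLeft (fun _ : Fin 4 => Fin d → ℝ) finSumFinEquiv) ⁻¹' A
      = (MeasurableEquiv.sumPiEquivProdPi (fun _ : Fin 2 ⊕ Fin 2 => Fin d → ℝ)) ⁻¹' (S ×ˢ S) := by
    ext h
    simp only [Set.mem_preimage, MeasurableEquiv.coe_piCongrLeft,
      MeasurableEquiv.coe_sumPiEquivProdPi, Set.mem_prod, hA, hS, Set.mem_setOf_eq]
    have e0 : (Equiv.piCongrLeft (fun _ : Fin 4 => Fin d → ℝ) finSumFinEquiv) h 0
        = h (Sum.inl 0) := by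
      rw [show (0 : Fin 4) = @finSumFinEquiv 2 2 (Sum.inl 0) from rfl]
      exact Equiv.piCongrLeft_apply_apply _ _ _ _
    have e1 : (Equiv.piCongrLeft (fun _ : Fin 4 => Fin d → ℝ) finSumFinEquiv) h 1
        = h (Sum.inl 1) := by
      rw [show (1 : Fin 4) = @finSumFinEquiv 2 2 (Sum.inl 1) from rfl]
      exact Equiv.piCongrLeft_apply_apply _ _ _ _
    have e2 : (Equiv.piCongrLeft (fun _ : Fin 4 => Fin d → ℝ) finSumFinEquiv) h 2
        = h (Sum.inr 0) := by
      rw [show (2 : Fin 4) = @finSumFinEquiv 2 2 (Sum.inr 0) from rfl]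
      exact Equiv.piCongrLeft_apply_apply _ _ _ _
    have e3 : (Equiv.piCongrLeft (fun _ : Fin 4 => Fin d → ℝ) finSumFinEquiv) h 3
        = h (Sum.inr 1) := by
      rw [show (3 : Fin 4) = @finSumFinEquiv 2 2 (Sum.inr 1) from rfl]
      exact Equiv.piCongrLeft_apply_apply _ _ _ _
    rw [e0, e1, e2, e3]
    rfl
  rw [step1, hpre, mp2.measure_preimage ((hSmeas.prod hSmeas)).nullMeasurableSet,
    Measure.prod_prod]
  have : (Measure.pi fun _ : Fin 2 => cube d) S = ENNReal.ofReal (1/2) ^ d := p2 d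
  rw [this]
lemma inj2 {n : ℕ} {i j : Fin n} (h : i ≠ j) : Function.Injective ![i, j] := by
  intro a b hab
  fin_cases a <;> fin_cases b <;> simp_all

lemma inj3 {n : ℕ} {i j k : Fin n} (hij : i ≠ j) (hik : i ≠ k) (hjk : j ≠ k) :
    Function.Injective ![i, j, k] := by
  intro a b hab
  fin_cases a <;> fin_cases b <;> simp_all

lemma inj4 {n : ℕ} {i j k l : Fin n} (hij : i ≠ j) (hik : i ≠ k) (hil : i ≠ l)
    (hjk : j ≠ k) (hjl : j ≠ l) (hkl : k ≠ l) :
    Function.Injective ![i, j, k, l] := by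
  intro a b hab
  fin_cases a <;> fin_cases b <;> simp_all

lemma measurableSet_ev2 (d : ℕ) :
    MeasurableSet {w : Fin 2 → Fin d → ℝ | dominates (w 0) (w 1)} := by
  have h0 : Measurable (fun w : Fin 2 → Fin d → ℝ => (w 0, w 1)) :=
    (measurable_pi_apply 0).prodMk (measurable_pi_apply 1)
  exact h0 (measurableSet_domProd d)

lemma measurableSet_ev3out (d : ℕ) :
    MeasurableSet {w : Fin 3 → Fin d → ℝ | dominates (w 0) (w 1) ∧ dominates (w 0) (w 2)} := by
  have h0 : Measurable (fun w : Fin 3 → Fin d → ℝ => (w 0, w 1)) :=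
    (measurable_pi_apply 0).prodMk (measurable_pi_apply 1)
  have h1 : Measurable (fun w : Fin 3 → Fin d → ℝ => (w 0, w 2)) :=
    (measurable_pi_apply 0).prodMk (measurable_pi_apply 2)
  exact (h0 (measurableSet_domProd d)).inter (h1 (measurableSet_domProd d))

lemma measurableSet_ev3in (d : ℕ) :
    MeasurableSet {w : Fin 3 → Fin d → ℝ | dominates (w 1) (w 0) ∧ dominates (w 2) (w 0)} := by
  have h0 : Measurable (fun w : Fin 3 → Fin d → ℝ => (w 1, w 0)) :=
    (measurable_pi_apply 1).prodMk (measurable_pi_apply 0)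
  have h1 : Measurable (fun w : Fin 3 → Fin d → ℝ => (w 2, w 0)) :=
    (measurable_pi_apply 2).prodMk (measurable_pi_apply 0)
  exact (h0 (measurableSet_domProd d)).inter (h1 (measurableSet_domProd d))

lemma measurableSet_ev4 (d : ℕ) :
    MeasurableSet {w : Fin 4 → Fin d → ℝ | dominates (w 0) (w 1) ∧ dominates (w 2) (w 3)} := by
  have h0 : Measurable (fun w : Fin 4 → Fin d → ℝ => (w 0, w 1)) :=
    (measurable_pi_apply 0).prodMk (measurable_pi_apply 1)
  have h1 : Measurable (fun w : Fin 4 → Fin d → ℝ => (w 2, w 3)) :=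
    (measurable_pi_apply 2).prodMk (measurable_pi_apply 3)
  exact (h0 (measurableSet_domProd d)).inter (h1 (measurableSet_domProd d))

lemma measure_D {n d : ℕ} {i j : Fin n} (h : i ≠ j) :
    sample n d (D n d i j) = ENNReal.ofReal (1/2) ^ d := by
  have mp := marginal (cube d) ![i, j] (inj2 h)
  have hpre : D n d i j = (fun ω : Fin n → Fin d → ℝ => ω ∘ ![i, j]) ⁻¹'
      {w : Fin 2 → Fin d → ℝ | dominates (w 0) (w 1)} := rfl
  rw [show sample n d = Measure.pi fun _ : Fin n => cube d from rfl, hpre,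
    mp.measure_preimage (measurableSet_ev2 d).nullMeasurableSet]
  exact p2 d

lemma measure_DD_out {n d : ℕ} {i j j' : Fin n} (hij : i ≠ j) (hij' : i ≠ j') (hjj' : j ≠ j') :
    sample n d (D n d i j ∩ D n d i j') = ENNReal.ofReal (1/3) ^ d := by
  have mp := marginal (cube d) ![i, j, j'] (inj3 hij hij' hjj')
  have hpre : D n d i j ∩ D n d i j' = (fun ω : Fin n → Fin d → ℝ => ω ∘ ![i, j, j']) ⁻¹'
      {w : Fin 3 → Fin d → ℝ | dominates (w 0) (w 1) ∧ dominates (w 0) (w 2)} := rfl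
  rw [show sample n d = Measure.pi fun _ : Fin n => cube d from rfl, hpre,
    mp.measure_preimage (measurableSet_ev3out d).nullMeasurableSet]
  exact p3out d

lemma measure_DD_in {n d : ℕ} {i i' j : Fin n} (hij : i ≠ j) (hi'j : i' ≠ j) (hii' : i ≠ i') :
    sample n d (D n d i j ∩ D n d i' j) = ENNReal.ofReal (1/3) ^ d := by
  have mp := marginal (cube d) ![j, i, i'] (inj3 (Ne.symm hij) (Ne.symm hi'j) hii')
  have hpre : D n d i j ∩ D n d i' j = (fun ω : Fin n → Fin d → ℝ => ω ∘ ![j, i, i']) ⁻¹'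
      {w : Fin 3 → Fin d → ℝ | dominates (w 1) (w 0) ∧ dominates (w 2) (w 0)} := rfl
  rw [show sample n d = Measure.pi fun _ : Fin n => cube d from rfl, hpre,
    mp.measure_preimage (measurableSet_ev3in d).nullMeasurableSet]
  exact p3in d

lemma measure_DD_disj {n d : ℕ} {i j i' j' : Fin n} (hij : i ≠ j) (hii' : i ≠ i')
    (hij' : i ≠ j') (hji' : j ≠ i') (hjj' : j ≠ j') (hi'j' : i' ≠ j') :
    sample n d (D n d i j ∩ D n d i' j')
      = ENNReal.ofReal (1/2) ^ d * ENNReal.ofReal (1/2) ^ d := by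
  have mp := marginal (cube d) ![i, j, i', j'] (inj4 hij hii' hij' hji' hjj' hi'j')
  have hpre : D n d i j ∩ D n d i' j' = (fun ω : Fin n → Fin d → ℝ => ω ∘ ![i, j, i', j']) ⁻¹'
      {w : Fin 4 → Fin d → ℝ | dominates (w 0) (w 1) ∧ dominates (w 2) (w 3)} := rfl
  rw [show sample n d = Measure.pi fun _ : Fin n => cube d from rfl, hpre,
    mp.measure_preimage (measurableSet_ev4 d).nullMeasurableSet]
  exact p4 d
lemma sum_ite_pair {β : Type*} [DecidableEq β] (s : Finset β) (c e : ℝ≥0∞) :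
    (∑ j ∈ s, ∑ j' ∈ s, if j = j' then c else e)
      = (s.card : ℝ≥0∞) * c + ((s.card * (s.card - 1) : ℕ) : ℝ≥0∞) * e := by
  have hinner : ∀ j ∈ s, (∑ j' ∈ s, if j = j' then c else e)
      = c + ((s.card - 1 : ℕ) : ℝ≥0∞) * e := by
    intro j hj
    rw [Finset.sum_ite]
    have h1 : s.filter (fun j' => j = j') = {j} := by
      ext x
      simp only [Finset.mem_filter, Finset.mem_singleton]
      constructor
      · rintro ⟨-, rfl⟩; rfl
      · rintro rfl; exact ⟨hj, rfl⟩
    have h2 : s.filter (fun j' => ¬ j = j') = s.erase j := by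
      ext x
      simp only [Finset.mem_filter, Finset.mem_erase]
      constructor
      · rintro ⟨hx, hne⟩; exact ⟨fun h => hne h.symm, hx⟩
      · rintro ⟨hne, hx⟩; exact ⟨hx, fun h => hne h.symm⟩
    rw [h1, h2, Finset.sum_const, Finset.sum_const, Finset.card_singleton,
      Finset.card_erase_of_mem hj, one_smul, nsmul_eq_mul]
  rw [Finset.sum_congr rfl hinner, Finset.sum_const, nsmul_eq_mul, mul_add, Nat.cast_mul,
    mul_assoc]

/-- The key second-moment (Paley–Zygmund) estimate: probability of no dominating pair
from `A` to `B`. -/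
lemma no_pair_bound (n d : ℕ) (A B : Finset (Fin n)) (hAB : Disjoint A B)
    (ha : A.Nonempty) (hb : B.Nonempty) :
    sample n d {ω | ∀ i ∈ A, ∀ j ∈ B, ¬ dominates (ω i) (ω j)}
      ≤ ((A.card : ℝ≥0∞) * B.card * ENNReal.ofReal (1/2) ^ d
          + (A.card : ℝ≥0∞) * B.card * ((A.card : ℝ≥0∞) + B.card) * ENNReal.ofReal (1/3) ^ d)
        / ((A.card : ℝ≥0∞) * B.card * ENNReal.ofReal (1/2) ^ d) ^ 2 := by
  classical
  set μ := sample n d with hμ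
  set p : ℝ≥0∞ := ENNReal.ofReal (1/2) ^ d with hp
  set q : ℝ≥0∞ := ENNReal.ofReal (1/3) ^ d with hq
  set W : (Fin n → Fin d → ℝ) → ℝ≥0∞ :=
    fun ω => ∑ i ∈ A, ∑ j ∈ B, (D n d i j).indicator 1 ω with hW
  have hne : ∀ i ∈ A, ∀ j ∈ B, i ≠ j := fun i hi j hj =>
    fun h => (Finset.disjoint_left.1 hAB) hi (h ▸ hj)
  have hWmeas : Measurable W := by
    apply Finset.measurable_sum
    intro i _
    apply Finset.measurable_sum
    intro j _
    exact measurable_one.indicator (measurableSet_D n d i j)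
  -- first moment
  have hE : ∫⁻ ω, W ω ∂μ = (A.card : ℝ≥0∞) * B.card * p := by
    rw [hW]
    rw [lintegral_finset_sum _ (fun i _ => Finset.measurable_sum _
      (fun j _ => measurable_one.indicator (measurableSet_D n d i j)))]
    have : ∀ i ∈ A, ∫⁻ ω, ∑ j ∈ B, (D n d i j).indicator 1 ω ∂μ = (B.card : ℝ≥0∞) * p := by
      intro i hi
      rw [lintegral_finset_sum _ (fun j _ => measurable_one.indicator (measurableSet_D n d i j))]
      have : ∀ j ∈ B, ∫⁻ ω, (D n d i j).indicator 1 ω ∂μ = p := by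
        intro j hj
        rw [lintegral_indicator_one (measurableSet_D n d i j)]
        exact measure_D (hne i hi j hj)
      rw [Finset.sum_congr rfl this, Finset.sum_const, nsmul_eq_mul]
    rw [Finset.sum_congr rfl this, Finset.sum_const, nsmul_eq_mul, mul_assoc]
  -- second moment
  have hterm : ∀ ω, W ω * W ω = ∑ i ∈ A, ∑ i' ∈ A, ∑ j ∈ B, ∑ j' ∈ B,
      ((D n d i j ∩ D n d i' j').indicator 1 ω) := by
    intro ω
    calc W ω * W ω
        = ∑ i ∈ A, ∑ i' ∈ A, (∑ j ∈ B, (D n d i j).indicator 1 ω)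
            * (∑ j' ∈ B, (D n d i' j').indicator 1 ω) :=
          Finset.sum_mul_sum A A _ _
      _ = _ := by
          refine Finset.sum_congr rfl fun i _ => Finset.sum_congr rfl fun i' _ => ?_
          rw [Finset.sum_mul_sum]
          refine Finset.sum_congr rfl fun j _ => Finset.sum_congr rfl fun j' _ => ?_
          rw [Set.inter_indicator_one]
          rfl
  have hE2 : ∫⁻ ω, W ω * W ω ∂μ = ∑ i ∈ A, ∑ i' ∈ A, ∑ j ∈ B, ∑ j' ∈ B,
      μ (D n d i j ∩ D n d i' j') := by
    rw [lintegral_congr fun ω => hterm ω]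
    rw [lintegral_finset_sum _ (fun i _ => by
      apply Finset.measurable_sum; intro i' _
      apply Finset.measurable_sum; intro j _
      apply Finset.measurable_sum; intro j' _
      exact measurable_one.indicator ((measurableSet_D n d i j).inter (measurableSet_D n d i' j')))]
    refine Finset.sum_congr rfl fun i _ => ?_
    rw [lintegral_finset_sum _ (fun i' _ => by
      apply Finset.measurable_sum; intro j _
      apply Finset.measurable_sum; intro j' _
      exact measurable_one.indicator ((measurableSet_D n d i j).inter (measurableSet_D n d i' j')))]
    refine Finset.sum_congr rfl fun i' _ => ?_
    rw [lintegral_finset_sum _ (fun j _ => by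
      apply Finset.measurable_sum; intro j' _
      exact measurable_one.indicator ((measurableSet_D n d i j).inter (measurableSet_D n d i' j')))]
    refine Finset.sum_congr rfl fun j _ => ?_
    rw [lintegral_finset_sum _ (fun j' _ =>
      measurable_one.indicator ((measurableSet_D n d i j).inter (measurableSet_D n d i' j')))]
    refine Finset.sum_congr rfl fun j' _ => ?_
    exact lintegral_indicator_one ((measurableSet_D n d i j).inter (measurableSet_D n d i' j'))
  -- bound the second moment
  have hcase : ∀ i ∈ A, ∀ i' ∈ A, ∀ j ∈ B, ∀ j' ∈ B,
      μ (D n d i j ∩ D n d i' j') ≤ if i = i' then (if j = j' then p else q)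
        else (if j = j' then q else p * p) := by
    intro i hi i' hi' j hj j' hj'
    by_cases hii' : i = i'
    · subst hii'
      by_cases hjj' : j = j'
      · subst hjj'
        simp only [if_pos rfl, Set.inter_self]
        exact le_of_eq (measure_D (hne i hi j hj))
      · simp only [if_pos rfl, if_neg hjj']
        exact le_of_eq (measure_DD_out (hne i hi j hj) (hne i hi j' hj') hjj')
    · by_cases hjj' : j = j'
      · subst hjj'
        simp only [if_neg hii', if_pos rfl]
        exact le_of_eq (measure_DD_in (hne i hi j hj) (hne i' hi' j hj) hii')
      · simp only [if_neg hii', if_neg hjj']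
        refine le_of_eq (measure_DD_disj (hne i hi j hj) hii' (hne i hi j' hj')
          (Ne.symm (hne i' hi' j hj)) hjj' (hne i' hi' j' hj'))
  have hE2le : ∫⁻ ω, W ω * W ω ∂μ
      ≤ (A.card : ℝ≥0∞) * ((B.card : ℝ≥0∞) * p + ((B.card * (B.card - 1) : ℕ) : ℝ≥0∞) * q)
        + ((A.card * (A.card - 1) : ℕ) : ℝ≥0∞)
          * ((B.card : ℝ≥0∞) * q + ((B.card * (B.card - 1) : ℕ) : ℝ≥0∞) * (p * p)) := by
    rw [hE2]
    calc ∑ i ∈ A, ∑ i' ∈ A, ∑ j ∈ B, ∑ j' ∈ B, μ (D n d i j ∩ D n d i' j')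
        ≤ ∑ i ∈ A, ∑ i' ∈ A, (if i = i'
            then ((B.card : ℝ≥0∞) * p + ((B.card * (B.card - 1) : ℕ) : ℝ≥0∞) * q)
            else ((B.card : ℝ≥0∞) * q + ((B.card * (B.card - 1) : ℕ) : ℝ≥0∞) * (p * p))) := by
          refine Finset.sum_le_sum fun i hi => Finset.sum_le_sum fun i' hi' => ?_
          by_cases hii' : i = i'
          · rw [if_pos hii', ← sum_ite_pair]
            refine Finset.sum_le_sum fun j hj => Finset.sum_le_sum fun j' hj' => ?_
            have := hcase i hi i' hi' j hj j' hj'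
            rwa [if_pos hii'] at this
          · rw [if_neg hii', ← sum_ite_pair]
            refine Finset.sum_le_sum fun j hj => Finset.sum_le_sum fun j' hj' => ?_
            have := hcase i hi i' hi' j hj j' hj'
            rwa [if_neg hii'] at this
      _ = _ := sum_ite_pair A _ _
  -- Paley–Zygmund via Cauchy–Schwarz
  set supp : Set (Fin n → Fin d → ℝ) := {ω | W ω ≠ 0} with hsupp
  have hsuppmeas : MeasurableSet supp := (hWmeas (measurableSet_singleton 0)).compl
  have hPZ : (∫⁻ ω, W ω ∂μ) ^ 2 ≤ (∫⁻ ω, W ω * W ω ∂μ) * μ supp := by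
    have hWind : ∀ ω, W ω = W ω * supp.indicator 1 ω := by
      intro ω
      by_cases h : W ω = 0
      · rw [h, zero_mul]
      · have hm : ω ∈ supp := h
        rw [Set.indicator_of_mem hm, Pi.one_apply, mul_one]
    have hg : AEMeasurable (supp.indicator (1 : (Fin n → Fin d → ℝ) → ℝ≥0∞)) μ :=
      (measurable_one.indicator hsuppmeas).aemeasurable
    have hcs := ENNReal.lintegral_mul_le_Lp_mul_Lq μ
      Real.HolderConjugate.two_two hWmeas.aemeasurable hg
    have h1 : ∫⁻ ω, (W * supp.indicator (1 : (Fin n → Fin d → ℝ) → ℝ≥0∞)) ω ∂μ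
        = ∫⁻ ω, W ω ∂μ := by
      refine lintegral_congr fun ω => ?_
      exact (hWind ω).symm
    have h2 : ∫⁻ ω, W ω ^ (2:ℝ) ∂μ = ∫⁻ ω, W ω * W ω ∂μ := by
      refine lintegral_congr fun ω => ?_
      rw [show (2:ℝ) = ((2:ℕ):ℝ) by norm_num, ENNReal.rpow_natCast, sq]
    have h3 : ∫⁻ ω, supp.indicator (1 : (Fin n → Fin d → ℝ) → ℝ≥0∞) ω ^ (2:ℝ) ∂μ = μ supp := by
      have : ∀ ω, supp.indicator (1 : (Fin n → Fin d → ℝ) → ℝ≥0∞) ω ^ (2:ℝ)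
          = supp.indicator (1 : (Fin n → Fin d → ℝ) → ℝ≥0∞) ω := by
        intro ω
        by_cases h : ω ∈ supp
        · rw [Set.indicator_of_mem h, Pi.one_apply, ENNReal.one_rpow]
        · rw [Set.indicator_of_notMem h, ENNReal.zero_rpow_of_pos (by norm_num)]
      rw [lintegral_congr this, lintegral_indicator_one hsuppmeas]
    rw [h1, h2, h3] at hcs
    calc (∫⁻ ω, W ω ∂μ) ^ 2
        ≤ ((∫⁻ ω, W ω * W ω ∂μ) ^ (1/2 : ℝ) * (μ supp) ^ (1/2 : ℝ)) ^ 2 := pow_le_pow_left' hcs 2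
      _ = (∫⁻ ω, W ω * W ω ∂μ) * μ supp := by
          rw [mul_pow, ← ENNReal.rpow_natCast (_ ^ (1/2:ℝ)), ← ENNReal.rpow_natCast ((μ supp) ^ (1/2:ℝ)),
            ← ENNReal.rpow_mul, ← ENNReal.rpow_mul]
          norm_num
  -- identify the event
  have hevent : {ω : Fin n → Fin d → ℝ | ∀ i ∈ A, ∀ j ∈ B, ¬ dominates (ω i) (ω j)}
      = {ω | W ω = 0} := by
    ext ω
    simp only [Set.mem_setOf_eq, hW]
    constructor
    · intro h
      refine Finset.sum_eq_zero fun i hi => Finset.sum_eq_zero fun j hj => ?_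
      exact Set.indicator_of_notMem (h i hi j hj) 1
    · intro h i hi j hj hdom
      have h1 := (Finset.sum_eq_zero_iff.1 h) i hi
      have h2 := (Finset.sum_eq_zero_iff.1 h1) j hj
      have hmem : ω ∈ D n d i j := hdom
      rw [Set.indicator_of_mem hmem, Pi.one_apply] at h2
      exact one_ne_zero h2
  have hcompl : {ω : Fin n → Fin d → ℝ | W ω = 0} = suppᶜ := by
    ext ω
    simp only [hsupp, Set.mem_setOf_eq, Set.mem_compl_iff, not_not]
  have hμ0 : μ {ω | W ω = 0} = 1 - μ supp := by
    rw [hcompl, measure_compl hsuppmeas (measure_ne_top μ supp), measure_univ]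
  -- second-moment bound with clean coefficients
  have hE2le' : ∫⁻ ω, W ω * W ω ∂μ
      ≤ ((A.card : ℝ≥0∞) * B.card * p
          + (A.card : ℝ≥0∞) * B.card * ((A.card : ℝ≥0∞) + B.card) * q)
        + ((A.card : ℝ≥0∞) * B.card * p) ^ 2 := by
    refine hE2le.trans ?_
    have hb1 : ((B.card - 1 : ℕ) : ℝ≥0∞) ≤ (B.card : ℝ≥0∞) := Nat.cast_le.2 (Nat.sub_le _ _)
    have ha1 : ((A.card - 1 : ℕ) : ℝ≥0∞) ≤ (A.card : ℝ≥0∞) := Nat.cast_le.2 (Nat.sub_le _ _)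
    have expand : (A.card : ℝ≥0∞) * ((B.card : ℝ≥0∞) * p
          + ((B.card * (B.card - 1) : ℕ) : ℝ≥0∞) * q)
        + ((A.card * (A.card - 1) : ℕ) : ℝ≥0∞) * ((B.card : ℝ≥0∞) * q
          + ((B.card * (B.card - 1) : ℕ) : ℝ≥0∞) * (p * p))
        = (A.card : ℝ≥0∞) * B.card * p
          + ((A.card : ℝ≥0∞) * (B.card : ℝ≥0∞) * ((B.card - 1 : ℕ) : ℝ≥0∞)) * q
          + ((A.card : ℝ≥0∞) * ((A.card - 1 : ℕ) : ℝ≥0∞) * (B.card : ℝ≥0∞)) * q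
          + ((A.card : ℝ≥0∞) * ((A.card - 1 : ℕ) : ℝ≥0∞) * (B.card : ℝ≥0∞)
              * ((B.card - 1 : ℕ) : ℝ≥0∞)) * (p * p) := by
      push_cast
      ring
    have target_eq : ((A.card : ℝ≥0∞) * B.card * p
          + (A.card : ℝ≥0∞) * B.card * ((A.card : ℝ≥0∞) + B.card) * q)
        + ((A.card : ℝ≥0∞) * B.card * p) ^ 2
        = (A.card : ℝ≥0∞) * B.card * p
          + ((A.card : ℝ≥0∞) * (B.card : ℝ≥0∞) * (B.card : ℝ≥0∞)) * q
          + ((A.card : ℝ≥0∞) * (A.card : ℝ≥0∞) * (B.card : ℝ≥0∞)) * q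
          + ((A.card : ℝ≥0∞) * (A.card : ℝ≥0∞) * (B.card : ℝ≥0∞) * (B.card : ℝ≥0∞))
            * (p * p) := by
      ring
    rw [expand, target_eq]
    gcongr
  -- put everything together
  rw [hevent, hμ0]
  have hp0 : p ≠ 0 := by
    refine pow_ne_zero _ ?_
    rw [Ne, ENNReal.ofReal_eq_zero]
    norm_num
  have hptop : p ≠ ∞ := ENNReal.pow_ne_top ENNReal.ofReal_ne_top
  have haN : (A.card : ℝ≥0∞) ≠ 0 := Nat.cast_ne_zero.2 ha.card_pos.ne'
  have hbN : (B.card : ℝ≥0∞) ≠ 0 := Nat.cast_ne_zero.2 hb.card_pos.ne'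
  have hE0 : (A.card : ℝ≥0∞) * B.card * p ≠ 0 := mul_ne_zero (mul_ne_zero haN hbN) hp0
  have hEtop : (A.card : ℝ≥0∞) * B.card * p ≠ ∞ :=
    ENNReal.mul_ne_top (ENNReal.mul_ne_top (ENNReal.natCast_ne_top _)
      (ENNReal.natCast_ne_top _)) hptop
  have hT0 : ((A.card : ℝ≥0∞) * B.card * p) ^ 2 ≠ 0 := pow_ne_zero _ hE0
  have hTtop : ((A.card : ℝ≥0∞) * B.card * p) ^ 2 ≠ ∞ := ENNReal.pow_ne_top hEtop
  rw [ENNReal.le_div_iff_mul_le (Or.inl hT0) (Or.inl hTtop)]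
  have hkey : ((A.card : ℝ≥0∞) * B.card * p) ^ 2
      ≤ (((A.card : ℝ≥0∞) * B.card * p
          + (A.card : ℝ≥0∞) * B.card * ((A.card : ℝ≥0∞) + B.card) * q)
        + ((A.card : ℝ≥0∞) * B.card * p) ^ 2) * μ supp := by
    calc ((A.card : ℝ≥0∞) * B.card * p) ^ 2
        = (∫⁻ ω, W ω ∂μ) ^ 2 := by rw [hE]
      _ ≤ (∫⁻ ω, W ω * W ω ∂μ) * μ supp := hPZ
      _ ≤ _ := mul_le_mul_left hE2le' _
  rw [ENNReal.sub_mul fun _ _ => hTtop, one_mul, tsub_le_iff_right]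
  calc ((A.card : ℝ≥0∞) * B.card * p) ^ 2
      ≤ (((A.card : ℝ≥0∞) * B.card * p
          + (A.card : ℝ≥0∞) * B.card * ((A.card : ℝ≥0∞) + B.card) * q)
        + ((A.card : ℝ≥0∞) * B.card * p) ^ 2) * μ supp := hkey
    _ = ((A.card : ℝ≥0∞) * B.card * p
          + (A.card : ℝ≥0∞) * B.card * ((A.card : ℝ≥0∞) + B.card) * q) * μ supp
        + ((A.card : ℝ≥0∞) * B.card * p) ^ 2 * μ supp := by ring
    _ ≤ ((A.card : ℝ≥0∞) * B.card * p
          + (A.card : ℝ≥0∞) * B.card * ((A.card : ℝ≥0∞) + B.card) * q)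
        + μ supp * ((A.card : ℝ≥0∞) * B.card * p) ^ 2 := by
        rw [mul_comm (μ supp)]
        exact add_le_add (mul_le_of_le_one_right' prob_le_one) le_rfl
lemma no_pair_bound' (n d m : ℕ) (hm : 0 < m) (A B : Finset (Fin n)) (hAB : Disjoint A B)
    (hA : A.card = m) (hB : B.card = m) :
    sample n d {ω | ∀ i ∈ A, ∀ j ∈ B, ¬ dominates (ω i) (ω j)}
      ≤ ENNReal.ofReal ((2:ℝ)^d/(m^2) + 2*(4/3:ℝ)^d/m) := by
  have ha : A.Nonempty := Finset.card_pos.1 (hA ▸ hm)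
  have hb : B.Nonempty := Finset.card_pos.1 (hB ▸ hm)
  have h := no_pair_bound n d A B hAB ha hb
  rw [hA, hB] at h
  refine h.trans (le_of_eq ?_)
  have eA : (m : ℝ≥0∞) * m * ENNReal.ofReal (1/2) ^ d
      = ENNReal.ofReal ((m:ℝ) * m * (1/2)^d) := by
    rw [ENNReal.ofReal_mul (by positivity), ENNReal.ofReal_mul (by positivity),
      ENNReal.ofReal_pow (by norm_num), ENNReal.ofReal_natCast]
  have eB : (m : ℝ≥0∞) * m * ((m : ℝ≥0∞) + m) * ENNReal.ofReal (1/3) ^ d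
      = ENNReal.ofReal ((m:ℝ) * m * ((m:ℝ) + m) * (1/3)^d) := by
    rw [ENNReal.ofReal_mul (by positivity), ENNReal.ofReal_mul (by positivity),
      ENNReal.ofReal_mul (by positivity), ENNReal.ofReal_pow (by norm_num),
      ENNReal.ofReal_add (by positivity) (by positivity), ENNReal.ofReal_natCast]
  have eC : ((m : ℝ≥0∞) * m * ENNReal.ofReal (1/2) ^ d) ^ 2
      = ENNReal.ofReal (((m:ℝ) * m * (1/2)^d) ^ 2) := by
    rw [eA, ← ENNReal.ofReal_pow (by positivity)]
  rw [eC, eA, eB, ← ENNReal.ofReal_add (by positivity) (by positivity),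
    ← ENNReal.ofReal_div_of_pos (by positivity)]
  congr 1
  have hm' : (m:ℝ) ≠ 0 := Nat.cast_ne_zero.2 hm.ne'
  have h2 : (2:ℝ)^d ≠ 0 := pow_ne_zero _ (by norm_num)
  have h3 : (3:ℝ)^d ≠ 0 := pow_ne_zero _ (by norm_num)
  have e1 : (1/2:ℝ)^d = 1/2^d := by rw [div_pow, one_pow]
  have e2 : (1/3:ℝ)^d = 1/3^d := by rw [div_pow, one_pow]
  have e3 : (4/3:ℝ)^d = 2^d*2^d/3^d := by
    rw [div_pow]
    congr 1
    rw [show (4:ℝ) = 2*2 by norm_num, mul_pow]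
  rw [e1, e2, e3]
  field_simp
  ring

lemma main_bound (N n dd m : ℕ) (hN : 0 < N) (hm : 0 < m) (hle : 2*N*m ≤ n) :
    sample n dd {ω | ¬ (N ≤ nonParetoCount n dd ω)}
      ≤ (N : ℝ≥0∞) * ENNReal.ofReal ((2:ℝ)^dd/(m^2) + 2*(4/3:ℝ)^dd/m) := by
  classical
  have hn : 0 < n :=
    lt_of_lt_of_le (Nat.mul_pos (Nat.mul_pos (by norm_num) hN) hm) hle
  set A : ℕ → Finset (Fin n) := fun g =>
    (Finset.Ico (2*g*m) (min (2*g*m+m) n)).attachFin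
      (fun x hx => lt_of_lt_of_le (Finset.mem_Ico.1 hx).2 (min_le_right _ _)) with hAdef
  set B : ℕ → Finset (Fin n) := fun g =>
    (Finset.Ico ((2*g+1)*m) (min ((2*g+1)*m+m) n)).attachFin
      (fun x hx => lt_of_lt_of_le (Finset.mem_Ico.1 hx).2 (min_le_right _ _)) with hBdef
  have hup : ∀ g, g < N → (2*g+1)*m + m ≤ n := by
    intro g hg
    have h1 : (2*g+1)*m + m = 2*(g+1)*m := by ring
    rw [h1]
    calc 2*(g+1)*m ≤ 2*N*m :=
          Nat.mul_le_mul_right m (Nat.mul_le_mul_left 2 (Nat.succ_le_of_lt hg))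
      _ ≤ n := hle
  have hupA : ∀ g, g < N → 2*g*m + m ≤ n := by
    intro g hg
    have h1 := hup g hg
    have hexp : (2*g+1)*m = 2*g*m + m := by ring
    omega
  have hcardA : ∀ g, g < N → (A g).card = m := by
    intro g hg
    rw [hAdef]
    dsimp only
    rw [Finset.card_attachFin, min_eq_left (hupA g hg), Nat.card_Ico]
    omega
  have hcardB : ∀ g, g < N → (B g).card = m := by
    intro g hg
    rw [hBdef]
    dsimp only
    rw [Finset.card_attachFin, min_eq_left (hup g hg), Nat.card_Ico]
    omega
  have hmemA : ∀ g (i : Fin n), i ∈ A g ↔ (2*g*m ≤ i.val ∧ i.val < min (2*g*m+m) n) := by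
    intro g i
    rw [hAdef]
    dsimp only
    rw [Finset.mem_attachFin, Finset.mem_Ico]
  have hmemB : ∀ g (i : Fin n),
      i ∈ B g ↔ ((2*g+1)*m ≤ i.val ∧ i.val < min ((2*g+1)*m+m) n) := by
    intro g i
    rw [hBdef]
    dsimp only
    rw [Finset.mem_attachFin, Finset.mem_Ico]
  have hdisj : ∀ g, Disjoint (A g) (B g) := by
    intro g
    rw [Finset.disjoint_left]
    intro i hiA hiB
    have h1 : i.val < 2*g*m + m := lt_of_lt_of_le ((hmemA g i).1 hiA).2 (min_le_left _ _)
    have h2 := ((hmemB g i).1 hiB).1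
    have hexp : (2*g+1)*m = 2*g*m + m := by ring
    omega
  set bad : ℕ → Set (Fin n → Fin dd → ℝ) := fun g =>
    {ω | ∀ i ∈ A g, ∀ j ∈ B g, ¬ dominates (ω i) (ω j)} with hbaddef
  have hsub : {ω : Fin n → Fin dd → ℝ | ¬ (N ≤ nonParetoCount n dd ω)}
      ⊆ ⋃ g ∈ Finset.range N, bad g := by
    intro ω hω
    by_contra hc
    apply hω
    simp only [Set.mem_iUnion, not_exists] at hc
    have hpair : ∀ g, g < N → ∃ i, i ∈ A g ∧ ∃ j, j ∈ B g ∧ dominates (ω i) (ω j) := by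
      intro g hg
      have h1 := hc g (Finset.mem_range.2 hg)
      rw [hbaddef] at h1
      simp only [Set.mem_setOf_eq, not_forall] at h1
      obtain ⟨i, hi, j, hj, hdom⟩ := h1
      exact ⟨i, hi, j, hj, not_not.1 hdom⟩
    have hwit : ∀ g, ∃ ij : Fin n × Fin n,
        g < N → (ij.1 ∈ A g ∧ ij.2 ∈ B g ∧ dominates (ω ij.1) (ω ij.2)) := by
      intro g
      by_cases hg : g < N
      · obtain ⟨i, hi, j, hj, hdom⟩ := hpair g hg
        exact ⟨(i, j), fun _ => ⟨hi, hj, hdom⟩⟩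
      · exact ⟨(⟨0, hn⟩, ⟨0, hn⟩), fun h => absurd h hg⟩
    set F : ℕ → Fin n := fun g => (Classical.choose (hwit g)).1 with hFdef
    have hFA : ∀ g, g < N → F g ∈ A g := fun g hg => ((Classical.choose_spec (hwit g)) hg).1
    have hFdom : ∀ g, g < N → ∃ j, j ∈ B g ∧ dominates (ω (F g)) (ω j) := by
      intro g hg
      obtain ⟨-, hj, hdom⟩ := (Classical.choose_spec (hwit g)) hg
      exact ⟨_, hj, hdom⟩
    have hmaps : ∀ g ∈ Finset.range N,
        F g ∈ Finset.univ.filter fun i => 1 ≤ domCount n dd ω i := by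
      intro g hg
      rw [Finset.mem_range] at hg
      obtain ⟨j, hjB, hdom⟩ := hFdom g hg
      refine Finset.mem_filter.2 ⟨Finset.mem_univ _, ?_⟩
      have hne : j ≠ F g := by
        intro h
        exact (Finset.disjoint_right.1 (hdisj g)) hjB (h ▸ hFA g hg)
      have : 0 < domCount n dd ω (F g) := by
        rw [domCount, Finset.card_pos]
        exact ⟨j, by simp [hne, hdom]⟩
      omega
    have hinj : Set.InjOn F (Finset.range N : Finset ℕ) := by
      have hsep : ∀ g g', g' < N → g < g' → (F g).val < (F g').val := by
        intro g g' hg' hgg'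
        have h1 : (F g).val < 2*g*m + m :=
          lt_of_lt_of_le ((hmemA g (F g)).1 (hFA g (lt_trans hgg' hg'))).2 (min_le_left _ _)
        have h2 : 2*g'*m ≤ (F g').val := ((hmemA g' (F g')).1 (hFA g' hg')).1
        have h3 : 2*g*m + m ≤ 2*g'*m := by
          have h4 : (2*g+1)*m ≤ (2*g')*m := Nat.mul_le_mul_right m (by omega)
          have hexp : (2*g+1)*m = 2*g*m + m := by ring
          rw [hexp] at h4
          exact h4
        omega
      intro g hg g' hg' heq
      simp only [Finset.coe_range, Set.mem_Iio] at hg hg'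
      rcases lt_trichotomy g g' with h | h | h
      · exact absurd (congrArg Fin.val heq) (Nat.ne_of_lt (hsep g g' hg' h))
      · exact h
      · exact absurd (congrArg Fin.val heq).symm (Nat.ne_of_lt (hsep g' g hg h))
    calc N = (Finset.range N).card := (Finset.card_range N).symm
      _ ≤ (Finset.univ.filter fun i => 1 ≤ domCount n dd ω i).card :=
          Finset.card_le_card_of_injOn F hmaps hinj
      _ = nonParetoCount n dd ω := by rw [nonParetoCount]
  calc sample n dd {ω | ¬ (N ≤ nonParetoCount n dd ω)}
      ≤ sample n dd (⋃ g ∈ Finset.range N, bad g) := measure_mono hsub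
    _ ≤ ∑ g ∈ Finset.range N, sample n dd (bad g) := measure_biUnion_finset_le _ _
    _ ≤ ∑ _g ∈ Finset.range N, ENNReal.ofReal ((2:ℝ)^dd/(m^2) + 2*(4/3:ℝ)^dd/m) := by
        refine Finset.sum_le_sum fun g hg => ?_
        rw [Finset.mem_range] at hg
        exact no_pair_bound' n dd m hm (A g) (B g) (hdisj g) (hcardA g hg) (hcardB g hg)
    _ = (N : ℝ≥0∞) * ENNReal.ofReal ((2:ℝ)^dd/(m^2) + 2*(4/3:ℝ)^dd/m) := by
        rw [Finset.sum_const, Finset.card_range, nsmul_eq_mul]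
lemma tendsto_A (d : ℕ → ℕ)
    (hd : Tendsto (fun n => (d n : ℝ) - 2 / Real.log 2 * Real.log n) atTop atBot) :
    Tendsto (fun n : ℕ => (2:ℝ)^(d n) / (n:ℝ)^2) atTop (nhds 0) := by
  have hlog2 : (0:ℝ) < Real.log 2 := Real.log_pos (by norm_num)
  have key : ∀ᶠ n : ℕ in atTop, (2:ℝ)^(d n) / (n:ℝ)^2
      = Real.exp (Real.log 2 * ((d n : ℝ) - 2 / Real.log 2 * Real.log n)) := by
    filter_upwards [Filter.eventually_gt_atTop 0] with n hn
    have hn' : (0:ℝ) < n := Nat.cast_pos.2 hn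
    rw [mul_sub]
    have h1 : Real.log 2 * (d n : ℝ) = Real.log ((2:ℝ)^(d n)) := by
      rw [Real.log_pow]; ring
    have h2 : Real.log 2 * (2 / Real.log 2 * Real.log n) = Real.log ((n:ℝ)^2) := by
      rw [Real.log_pow]
      field_simp
      ring
    rw [h1, h2, Real.exp_sub, Real.exp_log (by positivity), Real.exp_log (by positivity)]
  have hcomp : Tendsto (fun n : ℕ =>
      Real.exp (Real.log 2 * ((d n : ℝ) - 2 / Real.log 2 * Real.log n))) atTop (nhds 0) :=
    Real.tendsto_exp_atBot.comp (hd.const_mul_atBot hlog2)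
  exact (tendsto_congr' key).2 hcomp

lemma tendsto_B (d : ℕ → ℕ)
    (hd : Tendsto (fun n => (d n : ℝ) - 2 / Real.log 2 * Real.log n) atTop atBot) :
    Tendsto (fun n : ℕ => (4/3:ℝ)^(d n) / (n:ℝ)) atTop (nhds 0) := by
  have hlog2 : (0:ℝ) < Real.log 2 := Real.log_pos (by norm_num)
  have hlog43 : (0:ℝ) < Real.log (4/3) := Real.log_pos (by norm_num)
  set c : ℝ := 2 * Real.log (4/3) / Real.log 2 - 1 with hc
  have hcneg : c < 0 := by
    rw [hc, sub_neg, div_lt_one hlog2]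
    have h169 : 2 * Real.log (4/3) = Real.log (16/9) := by
      rw [show (16/9 : ℝ) = (4/3)^(2:ℕ) by norm_num, Real.log_pow]
      norm_num
    rw [h169]
    exact Real.log_lt_log (by norm_num) (by norm_num)
  have hupper : ∀ᶠ n : ℕ in atTop, (4/3:ℝ)^(d n) / (n:ℝ) ≤ Real.exp (c * Real.log n) := by
    have hev : ∀ᶠ n : ℕ in atTop, (d n : ℝ) - 2 / Real.log 2 * Real.log n ≤ 0 :=
      hd.eventually (eventually_le_atBot 0)
    filter_upwards [hev, Filter.eventually_gt_atTop 0] with n hn hn0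
    have hn' : (0:ℝ) < n := Nat.cast_pos.2 hn0
    have hdle : (d n : ℝ) ≤ 2 / Real.log 2 * Real.log n := by linarith
    have e1 : (4/3:ℝ)^(d n) / (n:ℝ)
        = Real.exp ((d n : ℝ) * Real.log (4/3) - Real.log n) := by
      rw [Real.exp_sub, Real.exp_log hn']
      congr 1
      rw [← Real.log_pow, Real.exp_log (by positivity)]
    rw [e1]
    apply Real.exp_le_exp.2
    have : (d n : ℝ) * Real.log (4/3) ≤ 2 / Real.log 2 * Real.log n * Real.log (4/3) :=
      mul_le_mul_of_nonneg_right hdle hlog43.le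
    calc (d n : ℝ) * Real.log (4/3) - Real.log n
        ≤ 2 / Real.log 2 * Real.log n * Real.log (4/3) - Real.log n := by linarith
      _ = c * Real.log n := by rw [hc]; field_simp
  have hexp : Tendsto (fun n : ℕ => Real.exp (c * Real.log n)) atTop (nhds 0) := by
    apply Real.tendsto_exp_atBot.comp
    rw [tendsto_const_mul_atBot_of_neg hcneg]
    exact Real.tendsto_log_atTop.comp tendsto_natCast_atTop_atTop
  refine squeeze_zero' ?_ hupper hexp
  filter_upwards with n
  positivity

theorem nonPareto_subcritical' (d : ℕ → ℕ)
    (hd : Tendsto (fun n => (d n : ℝ) - 2 / Real.log 2 * Real.log n) atTop atBot) :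
    ∀ N : ℕ, Tendsto
      (fun n => sample n (d n) {ω | N ≤ nonParetoCount n (d n) ω}) atTop (nhds 1) := by
  intro N
  rcases Nat.eq_zero_or_pos N with hN0 | hN
  · subst hN0
    have heq : (fun n => sample n (d n) {ω | 0 ≤ nonParetoCount n (d n) ω})
        = fun _ => (1 : ℝ≥0∞) := by
      funext n
      have huniv : {ω : Fin n → Fin (d n) → ℝ | 0 ≤ nonParetoCount n (d n) ω} = Set.univ :=
        Set.eq_univ_of_forall fun ω => Nat.zero_le _
      rw [huniv, measure_univ]
    rw [heq]
    exact tendsto_const_nhds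
  · set m : ℕ → ℕ := fun n => n / (2*N) with hmdef
    have h2N : 0 < 2*N := by omega
    -- real upper bound tends to zero
    have heps : Tendsto
        (fun n : ℕ => (N:ℝ) * ((2:ℝ)^(d n)/((m n : ℝ)^2) + 2*(4/3:ℝ)^(d n)/(m n))) atTop
        (nhds 0) := by
      have hU : Tendsto (fun n : ℕ => 16*(N:ℝ)^2*((2:ℝ)^(d n)/(n:ℝ)^2)
          + 8*(N:ℝ)*((4/3:ℝ)^(d n)/(n:ℝ))) atTop (nhds 0) := by
        have h1 := (tendsto_A d hd).const_mul (16*(N:ℝ)^2)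
        have h2 := (tendsto_B d hd).const_mul (8*(N:ℝ))
        have := h1.add h2
        simpa using this
      have hsq : Tendsto
          (fun n : ℕ => (2:ℝ)^(d n)/((m n : ℝ)^2) + 2*(4/3:ℝ)^(d n)/(m n)) atTop (nhds 0) := by
        refine squeeze_zero' ?_ ?_ hU
        · filter_upwards with n
          positivity
        · filter_upwards [Filter.eventually_ge_atTop (4*N)] with n hn4
          have hm1 : 1 ≤ m n := by
            have h1 : 1 ≤ n / (2*N) := by
              rw [Nat.le_div_iff_mul_le h2N]
              omega
            rw [hmdef]
            exact h1
          have hm0 : (0:ℝ) < (m n : ℝ) := by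
            have : (0:ℕ) < m n := hm1
            exact_mod_cast this
          have hn0 : (0:ℝ) < (n : ℝ) := by
            have : 0 < n := by omega
            exact_mod_cast this
          have hn4m : n ≤ 4*N*(m n) := by
            have hdm : 2*N*(m n) + n % (2*N) = n := by
              rw [hmdef]
              exact Nat.div_add_mod n (2*N)
            have hr : n % (2*N) < 2*N := Nat.mod_lt _ h2N
            have hm1' : 0 < m n := hm1
            have h2Nm : 2*N ≤ 2*N*(m n) := Nat.le_mul_of_pos_right _ hm1'
            calc n = 2*N*(m n) + n % (2*N) := hdm.symm
              _ ≤ 2*N*(m n) + 2*N := Nat.add_le_add_left hr.le _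
              _ ≤ 2*N*(m n) + 2*N*(m n) := Nat.add_le_add_left h2Nm _
              _ = 4*N*(m n) := by ring
          have hinv : 1/(m n : ℝ) ≤ 4*N/(n:ℝ) := by
            rw [div_le_div_iff₀ hm0 hn0]
            have : (n:ℝ) ≤ 4*N*(m n : ℝ) := by exact_mod_cast hn4m
            linarith
          have hterm1 : (2:ℝ)^(d n)/((m n : ℝ)^2) ≤ 16*(N:ℝ)^2*((2:ℝ)^(d n)/(n:ℝ)^2) := by
            have e1 : (2:ℝ)^(d n)/((m n : ℝ)^2) = (2:ℝ)^(d n) * (1/(m n:ℝ))^2 := by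
              field_simp
            have e2 : 16*(N:ℝ)^2*((2:ℝ)^(d n)/(n:ℝ)^2) = (2:ℝ)^(d n) * (4*N/(n:ℝ))^2 := by
              field_simp
              ring
            rw [e1, e2]
            exact mul_le_mul_of_nonneg_left
              (pow_le_pow_left₀ (by positivity) hinv 2) (by positivity)
          have hterm2 : 2*(4/3:ℝ)^(d n)/(m n : ℝ) ≤ 8*(N:ℝ)*((4/3:ℝ)^(d n)/(n:ℝ)) := by
            have e1 : 2*(4/3:ℝ)^(d n)/(m n : ℝ) = 2*(4/3:ℝ)^(d n) * (1/(m n:ℝ)) := by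
              field_simp
            have e2 : 8*(N:ℝ)*((4/3:ℝ)^(d n)/(n:ℝ)) = 2*(4/3:ℝ)^(d n) * (4*N/(n:ℝ)) := by
              field_simp
              ring
            rw [e1, e2]
            exact mul_le_mul_of_nonneg_left hinv (by positivity)
          exact add_le_add hterm1 hterm2
      have := hsq.const_mul (N:ℝ)
      simpa using this
    -- bad events tend to zero in measure
    have hbad : Tendsto (fun n => sample n (d n) {ω | ¬ (N ≤ nonParetoCount n (d n) ω)})
        atTop (nhds 0) := by
      have hub : ∀ᶠ n : ℕ in atTop,
          sample n (d n) {ω | ¬ (N ≤ nonParetoCount n (d n) ω)}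
            ≤ ENNReal.ofReal ((N:ℝ) * ((2:ℝ)^(d n)/((m n : ℝ)^2) + 2*(4/3:ℝ)^(d n)/(m n))) := by
        filter_upwards [Filter.eventually_ge_atTop (4*N)] with n hn4
        have hm1 : 0 < m n := by
          have h1 : 1 ≤ n / (2*N) := by
            rw [Nat.le_div_iff_mul_le h2N]
            omega
          rw [hmdef]
          exact h1
        have hle : 2*N*(m n) ≤ n := by
          rw [hmdef]
          calc 2*N*(n/(2*N)) = (n/(2*N))*(2*N) := by ring
            _ ≤ n := Nat.div_mul_le_self n (2*N)
        refine (main_bound N n (d n) (m n) hN hm1 hle).trans ?_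
        rw [ENNReal.ofReal_mul (by positivity), ENNReal.ofReal_natCast]
      refine tendsto_of_tendsto_of_tendsto_of_le_of_le' tendsto_const_nhds ?_
        (Filter.Eventually.of_forall fun n => zero_le) hub
      have := ENNReal.tendsto_ofReal heps
      simpa using this
    -- conclude
    have hgoodlb : ∀ n : ℕ, 1 - sample n (d n) {ω | ¬ (N ≤ nonParetoCount n (d n) ω)}
        ≤ sample n (d n) {ω | N ≤ nonParetoCount n (d n) ω} := by
      intro n
      rw [tsub_le_iff_right]
      have hcover : (Set.univ : Set (Fin n → Fin (d n) → ℝ))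
          ⊆ {ω | N ≤ nonParetoCount n (d n) ω} ∪ {ω | ¬ (N ≤ nonParetoCount n (d n) ω)} := by
        intro ω _
        by_cases h : N ≤ nonParetoCount n (d n) ω
        · exact Or.inl h
        · exact Or.inr h
      calc (1:ℝ≥0∞) = sample n (d n) Set.univ := measure_univ.symm
        _ ≤ sample n (d n) ({ω | N ≤ nonParetoCount n (d n) ω}
              ∪ {ω | ¬ (N ≤ nonParetoCount n (d n) ω)}) := measure_mono hcover
        _ ≤ _ := measure_union_le _ _
    have hlb : Tendsto (fun n => 1 - sample n (d n) {ω | ¬ (N ≤ nonParetoCount n (d n) ω)})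
        atTop (nhds 1) := by
      have := ENNReal.Tendsto.sub (tendsto_const_nhds (x := (1:ℝ≥0∞))) hbad
        (Or.inl ENNReal.one_ne_top)
      simpa using this
    refine tendsto_of_tendsto_of_tendsto_of_le_of_le hlb tendsto_const_nhds
      (fun n => hgoodlb n) (fun n => prob_le_one)
end NPSub

theorem nonPareto_subcritical (d : ℕ → ℕ)
    (hd : Tendsto (fun n => (d n : ℝ) - 2 / Real.log 2 * Real.log n) atTop atBot) :
    ∀ N : ℕ, Tendsto
      (fun n => sample n (d n) {ω | N ≤ nonParetoCount n (d n) ω}) atTop (nhds 1) :=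
  NPSub.nonPareto_subcritical' d hd
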